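/- arXiv:2603.25940 — 6 statements merged into one kernel-verified Lean document; each statement's English description precedes it below -/
import Mathlib

section
/- Let w : ℝ → ℝ be four times continuously differentiable on [0,1] with ∫₀¹ w(x)² dx > 0, satisfying w(0) = w(1) = 0 and either (w'(0) = w'(1) = 0) or (w''(0) = w''(1) = 0). Define κ(w) = (∫₀¹ w(x)·w''(x) dx) / (∫₀¹ w(x)² dx). If w satisfies the necessary condition w⁗(x) − 2·κ(w)·w''(x) + κ(w)²·w(x) = 0 for all x ∈ [0,1], then equality holds in the Cauchy–Schwarz inequality: (∫₀¹ w(x)·w''(x) dx)² = (∫₀¹ w(x)² dx) · (∫₀¹ (w''(x))² dx). -/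
/-- `D n w` is the `n`-th derivative of `w` on the interval `[0,1]`. -/
noncomputable def D (n : ℕ) (w : ℝ → ℝ) : ℝ → ℝ :=
  iteratedDerivWithin n w (Set.Icc (0 : ℝ) 1)

/-- The Rayleigh-type quotient `κ(w) = (∫₀¹ w w'') / (∫₀¹ w²)`. -/
noncomputable def kappa (w : ℝ → ℝ) : ℝ :=
  (∫ x in (0:ℝ)..1, w x * D 2 w x) / (∫ x in (0:ℝ)..1, (w x) ^ 2)

/-- Under clamped (`w = w' = 0` at both ends) or simply supported (`w = w'' = 0` at both
ends) boundary conditions, the necessary condition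
`w⁗ − 2 κ(w) w'' + κ(w)² w = 0` on `[0,1]` implies equality in the Cauchy–Schwarz
inequality `(∫ w w'')² = (∫ w²)(∫ (w'')²)`. -/
theorem necessary_condition_implies_cauchy_schwarz_equality
    (w : ℝ → ℝ) (hw : ContDiffOn ℝ 4 w (Set.Icc (0 : ℝ) 1))
    (hpos : 0 < ∫ x in (0:ℝ)..1, (w x) ^ 2)
    (h0 : w 0 = 0) (h1 : w 1 = 0)
    (hbc : (D 1 w 0 = 0 ∧ D 1 w 1 = 0) ∨ (D 2 w 0 = 0 ∧ D 2 w 1 = 0))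
    (hnc : ∀ x ∈ Set.Icc (0 : ℝ) 1,
      D 4 w x - 2 * kappa w * D 2 w x + (kappa w) ^ 2 * w x = 0) :
    (∫ x in (0:ℝ)..1, w x * D 2 w x) ^ 2
      = (∫ x in (0:ℝ)..1, (w x) ^ 2) * ∫ x in (0:ℝ)..1, (D 2 w x) ^ 2 := by
  have huIcc : Set.uIcc (0:ℝ) 1 = Set.Icc (0:ℝ) 1 := Set.uIcc_of_le (by norm_num)
  have hud : UniqueDiffOn ℝ (Set.Icc (0:ℝ) 1) := uniqueDiffOn_Icc (by norm_num)
  have hD0 : D 0 w = w := iteratedDerivWithin_zero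
  -- continuity of the derivatives
  have hC : ∀ n : ℕ, n ≤ 4 → ContinuousOn (D n w) (Set.Icc (0:ℝ) 1) := by
    intro n hn
    exact hw.continuousOn_iteratedDerivWithin (by exact_mod_cast hn) hud
  -- integrability helper
  have hci : ∀ f : ℝ → ℝ, ContinuousOn f (Set.Icc (0:ℝ) 1) →
      IntervalIntegrable f MeasureTheory.volume 0 1 := by
    intro f hf
    apply ContinuousOn.intervalIntegrable
    rwa [huIcc]
  -- derivatives within the interval
  have hD : ∀ n : ℕ, n < 4 → ∀ x ∈ Set.uIcc (0:ℝ) 1,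
      HasDerivWithinAt (D n w) (D (n+1) w x) (Set.uIcc (0:ℝ) 1) x := by
    intro n hn x hx
    rw [huIcc] at hx ⊢
    have hdiff := hw.differentiableOn_iteratedDerivWithin
      (show (n : WithTop ℕ∞) < 4 by exact_mod_cast hn) hud
    have h := (hdiff x hx).hasDerivWithinAt
    rwa [show D (n+1) w x = derivWithin (D n w) (Set.Icc (0:ℝ) 1) x from
      congrFun iteratedDerivWithin_succ x]
  -- integration by parts, step 1
  have ibp1 : ∫ x in (0:ℝ)..1, (D 1 w x * D 3 w x + w x * D 4 w x)
      = w 1 * D 3 w 1 - w 0 * D 3 w 0 := by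
    refine intervalIntegral.integral_deriv_mul_eq_sub_of_hasDerivWithinAt
      (u := w) (u' := D 1 w) (v := D 3 w) (v' := D 4 w) ?_ (hD 3 (by norm_num)) ?_ ?_
    · intro x hx
      have := hD 0 (by norm_num) x hx
      rwa [hD0] at this
    · exact hci _ (hC 1 (by norm_num))
    · exact hci _ (hC 4 (by norm_num))
  -- integration by parts, step 2
  have ibp2 : ∫ x in (0:ℝ)..1, (D 2 w x * D 2 w x + D 1 w x * D 3 w x)
      = D 1 w 1 * D 2 w 1 - D 1 w 0 * D 2 w 0 := by
    refine intervalIntegral.integral_deriv_mul_eq_sub_of_hasDerivWithinAt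
      (u := D 1 w) (u' := D 2 w) (v := D 2 w) (v' := D 3 w)
      (hD 1 (by norm_num)) (hD 2 (by norm_num)) ?_ ?_
    · exact hci _ (hC 2 (by norm_num))
    · exact hci _ (hC 3 (by norm_num))
  have hbterm : D 1 w 1 * D 2 w 1 - D 1 w 0 * D 2 w 0 = 0 := by
    rcases hbc with ⟨ha, hb⟩ | ⟨ha, hb⟩ <;> rw [ha, hb] <;> ring
  rw [h0, h1] at ibp1
  rw [hbterm] at ibp2
  -- split the integrals
  have hint13 : IntervalIntegrable (fun x => D 1 w x * D 3 w x) MeasureTheory.volume 0 1 := hci _ ((hC 1 (by norm_num)).mul (hC 3 (by norm_num)))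
  have hint04 : IntervalIntegrable (fun x => w x * D 4 w x) MeasureTheory.volume 0 1 := hci _ ((hw.continuousOn).mul (hC 4 (by norm_num)))
  have hint22 : IntervalIntegrable (fun x => D 2 w x * D 2 w x) MeasureTheory.volume 0 1 := hci _ ((hC 2 (by norm_num)).mul (hC 2 (by norm_num)))
  rw [intervalIntegral.integral_add hint13 hint04] at ibp1
  rw [intervalIntegral.integral_add hint22 hint13] at ibp2
  have hJeq : ∫ x in (0:ℝ)..1, D 2 w x * D 2 w x = ∫ x in (0:ℝ)..1, (D 2 w x) ^ 2 := by
    apply intervalIntegral.integral_congr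
    intro x _
    ring
  -- key identity: ∫ w w⁗ = ∫ (w'')²
  have hkey : ∫ x in (0:ℝ)..1, w x * D 4 w x = ∫ x in (0:ℝ)..1, (D 2 w x) ^ 2 := by
    rw [← hJeq]; linarith
  have hI0ne : (∫ x in (0:ℝ)..1, (w x) ^ 2) ≠ 0 := ne_of_gt hpos
  have hI2eq : (∫ x in (0:ℝ)..1, w x * D 2 w x)
      = kappa w * ∫ x in (0:ℝ)..1, (w x) ^ 2 := by
    unfold kappa
    rw [div_mul_cancel₀ _ hI0ne]
  -- integrate the necessary condition against w
  have hzero : ∫ x in (0:ℝ)..1,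
      (w x * D 4 w x - 2 * kappa w * (w x * D 2 w x) + kappa w ^ 2 * (w x) ^ 2) = 0 := by
    have hcong : (∫ x in (0:ℝ)..1,
        (w x * D 4 w x - 2 * kappa w * (w x * D 2 w x) + kappa w ^ 2 * (w x) ^ 2))
        = ∫ x in (0:ℝ)..1, (0:ℝ) := by
      apply intervalIntegral.integral_congr
      intro x hx
      rw [huIcc] at hx
      have h := hnc x hx
      linear_combination w x * h
    simpa using hcong
  have hint02 : IntervalIntegrable (fun x => w x * D 2 w x) MeasureTheory.volume 0 1 := hci _ ((hw.continuousOn).mul (hC 2 (by norm_num)))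
  have hint00 : IntervalIntegrable (fun x => (w x) ^ 2) MeasureTheory.volume 0 1 := by
    refine hci _ ?_
    exact (hw.continuousOn).pow 2
  rw [intervalIntegral.integral_add ((hint04).sub ((hint02).const_mul (2 * kappa w)))
      ((hint00).const_mul (kappa w ^ 2)),
    intervalIntegral.integral_sub hint04 ((hint02).const_mul (2 * kappa w)),
    intervalIntegral.integral_const_mul, intervalIntegral.integral_const_mul,
    hkey, hI2eq] at hzero
  -- conclude
  rw [hI2eq]
  linear_combination (-(∫ x in (0:ℝ)..1, (w x) ^ 2)) * hzero
end

section
/- Let ν ∈ (−1, 1/2) with ν ≠ 0, and let p : ℝ → ℝ be continuous on [0,1]. There is no function w : ℝ → ℝ, four times continuously differentiable on [0,1], with ∫₀¹ w(x)² dx > 0, satisfying the clamped boundary conditions w(0) = w(1) = 0 and w'(0) = w'(1) = 0, that solves simultaneously the PGD limit strip equation with Poisson ratio ν and load p and the Kirchhoff–Love strip equation with Poisson ratio ν and load p. -/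
/-- The PGD limit strip equation with Poisson ratio `ν` and load `p`. -/
def PGDeq (ν : ℝ) (w p : ℝ → ℝ) : Prop :=
  ∀ x ∈ Set.Icc (0 : ℝ) 1,
    ((1 - ν) / (12 * (1 + ν) * (1 - 2 * ν))) * D 4 w x
      - (ν ^ 2 / (12 * (1 - ν ^ 2) * (1 - 2 * ν)))
          * (2 * kappa w * D 2 w x - (kappa w) ^ 2 * w x) = p x

/-- The Kirchhoff–Love strip equation with Poisson ratio `ν` and load `p`. -/
def KLeq (ν : ℝ) (w p : ℝ → ℝ) : Prop :=
  ∀ x ∈ Set.Icc (0 : ℝ) 1, (1 / (12 * (1 - ν ^ 2))) * D 4 w x = p x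

open Set MeasureTheory intervalIntegral Filter Topology

lemma uD : UniqueDiffOn ℝ (Set.Icc (0:ℝ) 1) := uniqueDiffOn_Icc one_pos

lemma D_zero (w : ℝ → ℝ) : D 0 w = w := by funext x; simp [D]

lemma D_cont {w : ℝ → ℝ} (hw : ContDiffOn ℝ 4 w (Set.Icc 0 1)) {n : ℕ} (hn : n ≤ 4) :
    ContinuousOn (D n w) (Set.Icc 0 1) :=
  hw.continuousOn_iteratedDerivWithin (by exact_mod_cast hn) uD

lemma D_hasDeriv {w : ℝ → ℝ} (hw : ContDiffOn ℝ 4 w (Set.Icc 0 1)) {n : ℕ} (hn : n < 4)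
    {x : ℝ} (hx : x ∈ Set.Icc (0:ℝ) 1) :
    HasDerivWithinAt (D n w) (D (n+1) w x) (Set.Icc 0 1) x := by
  have h := (hw.differentiableOn_iteratedDerivWithin (by exact_mod_cast hn) uD) x hx
  have h2 := h.hasDerivWithinAt
  rwa [show derivWithin (iteratedDerivWithin n w (Set.Icc 0 1)) (Set.Icc 0 1) x
      = D (n+1) w x from (congrFun iteratedDerivWithin_succ x).symm] at h2

lemma ibp {u v u' v' : ℝ → ℝ}
    (hu : ContinuousOn u (Icc 0 1)) (hv : ContinuousOn v (Icc 0 1))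
    (hu' : ContinuousOn u' (Icc 0 1)) (hv' : ContinuousOn v' (Icc 0 1))
    (hdu : ∀ x ∈ Icc (0:ℝ) 1, HasDerivWithinAt u (u' x) (Icc 0 1) x)
    (hdv : ∀ x ∈ Icc (0:ℝ) 1, HasDerivWithinAt v (v' x) (Icc 0 1) x) :
    ∫ x in (0:ℝ)..1, (u' x * v x + u x * v' x) = u 1 * v 1 - u 0 * v 0 := by
  apply integral_eq_sub_of_hasDerivAt_of_le zero_le_one (hu.mul hv)
  · intro x hx
    have hmem : Icc (0:ℝ) 1 ∈ 𝓝 x := Icc_mem_nhds hx.1 hx.2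
    exact ((hdu x (Ioo_subset_Icc_self hx)).hasDerivAt hmem).mul
      ((hdv x (Ioo_subset_Icc_self hx)).hasDerivAt hmem)
  · exact ((hu'.mul hv).add (hu.mul hv')).intervalIntegrable_of_Icc zero_le_one

/-- For `ν ≠ 0`, no clamped strip deflection can solve simultaneously the PGD limit
equation and the Kirchhoff–Love equation. -/
theorem no_clamped_solution_of_both_equations
    (ν : ℝ) (hν : ν ∈ Set.Ioo (-1 : ℝ) (1/2)) (hν0 : ν ≠ 0)
    (p : ℝ → ℝ) (hp : ContinuousOn p (Set.Icc (0 : ℝ) 1)) :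
    ¬ ∃ w : ℝ → ℝ, ContDiffOn ℝ 4 w (Set.Icc (0 : ℝ) 1) ∧
        (0 < ∫ x in (0:ℝ)..1, (w x) ^ 2) ∧
        w 0 = 0 ∧ w 1 = 0 ∧ D 1 w 0 = 0 ∧ D 1 w 1 = 0 ∧
        PGDeq ν w p ∧ KLeq ν w p := by
  rintro ⟨w, hw, hI, hw0, hw1, hw'0, hw'1, hPGD, hKL⟩
  obtain ⟨hν1, hν2⟩ := hν
  set k := kappa w with hkdef
  -- nonzero denominators
  have h1p : (0:ℝ) < 1 + ν := by linarith
  have h12 : (0:ℝ) < 1 - 2 * ν := by linarith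
  have h1m : (0:ℝ) < 1 - ν := by linarith
  have hsq : (0:ℝ) < 1 - ν ^ 2 := by nlinarith
  -- Step 1: pointwise ODE from the two equations
  have key : ∀ x ∈ Icc (0:ℝ) 1,
      D 4 w x = 2 * k * D 2 w x - k ^ 2 * w x := by
    intro x hx
    have e1 := hPGD x hx
    have e2 := hKL x hx
    rw [← e2] at e1
    have hc : ν ^ 2 / (12 * (1 - ν ^ 2) * (1 - 2 * ν)) ≠ 0 := by
      apply div_ne_zero (pow_ne_zero 2 hν0); positivity
    apply mul_left_cancel₀ hc
    have hcoef : (1 - ν) / (12 * (1 + ν) * (1 - 2 * ν)) - 1 / (12 * (1 - ν ^ 2))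
        = ν ^ 2 / (12 * (1 - ν ^ 2) * (1 - 2 * ν)) := by
      have hA : (12 * (1 + ν) * (1 - 2 * ν)) ≠ 0 := (mul_pos (mul_pos (by norm_num) h1p) h12).ne'
      have hB : (12 * (1 - ν ^ 2)) ≠ 0 := (mul_pos (by norm_num) hsq).ne'
      have hC : 12 * (1 - ν ^ 2) * (1 - 2 * ν) ≠ 0 := (mul_pos (mul_pos (by norm_num) hsq) h12).ne'
      rw [div_sub_div _ _ hA hB, div_eq_div_iff (mul_ne_zero hA hB) hC]
      ring
    linear_combination e1 - D 4 w x * hcoef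
  -- continuity and derivative facts
  have c0 : ContinuousOn w (Icc (0:ℝ) 1) := hw.continuousOn
  have c1 : ContinuousOn (D 1 w) (Icc (0:ℝ) 1) := D_cont hw (by norm_num)
  have c2 : ContinuousOn (D 2 w) (Icc (0:ℝ) 1) := D_cont hw (by norm_num)
  have c3 : ContinuousOn (D 3 w) (Icc (0:ℝ) 1) := D_cont hw (by norm_num)
  have c4 : ContinuousOn (D 4 w) (Icc (0:ℝ) 1) := D_cont hw (by norm_num)
  have d0 : ∀ x ∈ Icc (0:ℝ) 1, HasDerivWithinAt w (D 1 w x) (Icc 0 1) x := by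
    intro x hx
    have := D_hasDeriv hw (by norm_num : (0:ℕ) < 4) hx
    rwa [D_zero] at this
  have d1 : ∀ x ∈ Icc (0:ℝ) 1, HasDerivWithinAt (D 1 w) (D 2 w x) (Icc 0 1) x :=
    fun x hx => D_hasDeriv hw (by norm_num) hx
  have d3 : ∀ x ∈ Icc (0:ℝ) 1, HasDerivWithinAt (D 3 w) (D 4 w x) (Icc 0 1) x :=
    fun x hx => D_hasDeriv hw (by norm_num) hx
  -- integrability
  have iA : IntervalIntegrable (fun x => w x * D 2 w x) volume 0 1 :=
    (c0.mul c2).intervalIntegrable_of_Icc zero_le_one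
  have iB : IntervalIntegrable (fun x => D 1 w x * D 1 w x) volume 0 1 :=
    (c1.mul c1).intervalIntegrable_of_Icc zero_le_one
  have iE : IntervalIntegrable (fun x => D 1 w x * D 3 w x) volume 0 1 :=
    (c1.mul c3).intervalIntegrable_of_Icc zero_le_one
  have iC : IntervalIntegrable (fun x => w x * D 4 w x) volume 0 1 :=
    (c0.mul c4).intervalIntegrable_of_Icc zero_le_one
  have iK : IntervalIntegrable (fun x => D 2 w x * D 2 w x) volume 0 1 :=
    (c2.mul c2).intervalIntegrable_of_Icc zero_le_one
  have iI : IntervalIntegrable (fun x => (w x)^2) volume 0 1 :=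
    (c0.pow 2).intervalIntegrable_of_Icc zero_le_one
  -- integration by parts
  have hBA : (∫ x in (0:ℝ)..1, D 1 w x * D 1 w x) + (∫ x in (0:ℝ)..1, w x * D 2 w x) = 0 := by
    have h := ibp c0 c1 c1 c2 d0 d1
    rw [integral_add iB iA, hw0, hw1] at h
    simpa using h
  have hEC : (∫ x in (0:ℝ)..1, D 1 w x * D 3 w x) + (∫ x in (0:ℝ)..1, w x * D 4 w x) = 0 := by
    have h := ibp c0 c3 c1 c4 d0 d3
    rw [integral_add iE iC, hw0, hw1] at h
    simpa using h
  have hKE : (∫ x in (0:ℝ)..1, D 2 w x * D 2 w x) + (∫ x in (0:ℝ)..1, D 1 w x * D 3 w x) = 0 := by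
    have h := ibp c1 c2 c2 c3 d1 (fun x hx => D_hasDeriv hw (by norm_num) hx)
    rw [integral_add iK iE, hw'0, hw'1] at h
    simpa using h
  -- value of ∫ w * w''''
  have hCval : (∫ x in (0:ℝ)..1, w x * D 4 w x)
      = 2*k*(∫ x in (0:ℝ)..1, w x * D 2 w x) - k^2*(∫ x in (0:ℝ)..1, (w x)^2) := by
    have e : (∫ x in (0:ℝ)..1, w x * D 4 w x)
        = ∫ x in (0:ℝ)..1, (2*k*(w x * D 2 w x) - k^2*((w x)^2)) := by
      apply integral_congr
      intro x hx
      rw [uIcc_of_le zero_le_one] at hx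
      show w x * D 4 w x = 2*k*(w x * D 2 w x) - k^2*((w x)^2)
      rw [key x hx]; ring
    rw [e, integral_sub (iA.const_mul _) (iI.const_mul _), intervalIntegral.integral_const_mul,
      intervalIntegral.integral_const_mul]
  -- kappa relation
  have hIA : (∫ x in (0:ℝ)..1, w x * D 2 w x) = k * (∫ x in (0:ℝ)..1, (w x)^2) := by
    rw [hkdef, kappa, div_mul_cancel₀ _ (ne_of_gt hI)]
  -- the L² norm of w'' - k w vanishes
  have hzero : (∫ x in (0:ℝ)..1, (D 2 w x - k * w x)^2) = 0 := by
    have e : (∫ x in (0:ℝ)..1, (D 2 w x - k * w x)^2)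
        = ∫ x in (0:ℝ)..1, (D 2 w x * D 2 w x - 2*k*(w x * D 2 w x) + k^2*((w x)^2)) := by
      apply integral_congr
      intro x _
      show (D 2 w x - k * w x)^2
        = D 2 w x * D 2 w x - 2*k*(w x * D 2 w x) + k^2*((w x)^2)
      ring
    rw [e, integral_add ((iK.sub (iA.const_mul _))) (iI.const_mul _),
      integral_sub iK (iA.const_mul _), intervalIntegral.integral_const_mul, intervalIntegral.integral_const_mul]
    nlinarith [hBA, hEC, hKE, hCval, hIA]
  -- hence w'' = k w on [0,1]
  have hpt : ∀ x ∈ Icc (0:ℝ) 1, D 2 w x = k * w x := by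
    intro x hx
    by_contra hne
    have hs : D 2 w x - k * w x ≠ 0 := sub_ne_zero.mpr hne
    have hpos : 0 < (D 2 w x - k * w x)^2 := by positivity
    have hcont : ContinuousOn (fun y => (D 2 w y - k * w y)^2) (Icc 0 1) :=
      (c2.sub (continuousOn_const.mul c0)).pow 2
    have := integral_pos zero_lt_one hcont (fun y _ => sq_nonneg _) ⟨x, hx, hpos⟩
    linarith
  -- ODE uniqueness: w ≡ 0
  set L : ℝ × ℝ →L[ℝ] ℝ × ℝ :=
    (ContinuousLinearMap.snd ℝ ℝ ℝ).prod (k • ContinuousLinearMap.fst ℝ ℝ ℝ) with hL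
  have hEq : EqOn (fun t => (w t, D 1 w t)) (fun _ : ℝ => ((0:ℝ), (0:ℝ))) (Icc (0:ℝ) 1) := by
    apply ODE_solution_unique (v := fun _ y => L y) (fun _ => L.lipschitz)
    · exact c0.prodMk c1
    · intro t ht
      have ht' : t ∈ Icc (0:ℝ) 1 := Ico_subset_Icc_self ht
      have hmem : Icc (0:ℝ) 1 ∈ 𝓝[Ici t] t :=
        mem_nhdsWithin.mpr ⟨Iio 1, isOpen_Iio, ht.2, fun y hy => ⟨ht.1.trans hy.2, hy.1.le⟩⟩
      have hd : HasDerivWithinAt (fun t => (w t, D 1 w t)) (D 1 w t, D 2 w t) (Icc 0 1) t :=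
        (d0 t ht').prodMk (d1 t ht')
      have hLv : L ((w t), (D 1 w t)) = (D 1 w t, D 2 w t) := by
        simp [hL, hpt t ht']
      simpa [hLv] using hd.mono_of_mem_nhdsWithin hmem
    · exact continuousOn_const
    · intro t ht
      have hLv : L ((0:ℝ), (0:ℝ)) = ((0:ℝ), (0:ℝ)) := by simp [hL]
      exact (hasDerivWithinAt_const (𝕜 := ℝ) (s := Ici t) (x := t)
        (c := ((0:ℝ), (0:ℝ)))).congr_deriv (by simp [hLv]; rfl)
    · simp [hw0, hw'0]
  have hwz : ∀ x ∈ Icc (0:ℝ) 1, w x = 0 := fun x hx => congrArg Prod.fst (hEq hx)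
  have hI0 : (∫ x in (0:ℝ)..1, (w x)^2) = 0 := by
    have e : EqOn (fun x => (w x)^2) (fun _ => (0:ℝ)) (uIcc (0:ℝ) 1) := by
      intro x hx
      rw [uIcc_of_le zero_le_one] at hx
      simp [hwz x hx]
    rw [integral_congr e]
    simp
  linarith
end

section
/- Let ν ∈ (−1, 1/2) with ν ≠ 0, and let p : ℝ → ℝ be continuous on [0,1]. Suppose w : ℝ → ℝ is four times continuously differentiable on [0,1], with ∫₀¹ w(x)² dx > 0, satisfies the simply supported boundary conditions w(0) = w(1) = 0 and w''(0) = w''(1) = 0, and solves simultaneously the PGD limit strip equation with Poisson ratio ν and load p and the Kirchhoff–Love strip equation with Poisson ratio ν and load p. Then there exist a positive integer n and a nonzero constant c such that w(x) = c·sin(n·π·x) for all x ∈ [0,1] and p(x) = (c·(n·π)⁴/(12(1−ν²)))·sin(n·π·x) for all x ∈ [0,1]. -/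
open Real

lemma myftc {f f' : ℝ → ℝ} (hf : ContinuousOn f (Set.Icc 0 1))
    (hd : ∀ t ∈ Set.Icc (0:ℝ) 1, HasDerivWithinAt f (f' t) (Set.Icc (0:ℝ) 1) t)
    (hc : ContinuousOn f' (Set.Icc 0 1)) {x : ℝ} (hx : x ∈ Set.Icc (0:ℝ) 1) :
    ∫ t in (0:ℝ)..x, f' t = f x - f 0 := by
  apply intervalIntegral.integral_eq_sub_of_hasDeriv_right_of_le hx.1
    (hf.mono (Set.Icc_subset_Icc_right hx.2))
    (fun t ht => (hd t ⟨ht.1.le, ht.2.le.trans hx.2⟩).mono_of_mem_nhdsWithin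
      (Icc_mem_nhdsGT_of_mem ⟨ht.1.le, lt_of_lt_of_le ht.2 hx.2⟩))
    ((hc.mono (Set.Icc_subset_Icc_right hx.2)).intervalIntegrable_of_Icc hx.1)

lemma myconst {f : ℝ → ℝ} (hf : ContinuousOn f (Set.Icc 0 1))
    (hd : ∀ t ∈ Set.Icc (0:ℝ) 1, HasDerivWithinAt f 0 (Set.Icc (0:ℝ) 1) t)
    {x : ℝ} (hx : x ∈ Set.Icc (0:ℝ) 1) : f x = f 0 := by
  have h := myftc (f' := fun _ => (0:ℝ)) hf hd continuousOn_const hx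
  simp at h
  linarith

lemma Zlem {f : ℝ → ℝ} (hf : ContinuousOn f (Set.Icc 0 1))
    (h0 : ∀ x ∈ Set.Icc (0:ℝ) 1, 0 ≤ f x) (hz : ∫ t in (0:ℝ)..1, f t = 0) :
    ∀ x ∈ Set.Icc (0:ℝ) 1, f x = 0 := by
  intro x hx
  by_contra h
  have hpos : 0 < f x := lt_of_le_of_ne (h0 x hx) (Ne.symm h)
  have := intervalIntegral.integral_pos one_pos hf
    (fun t ht => h0 t (Set.Ioc_subset_Icc_self ht)) ⟨x, hx, hpos⟩
  linarith

lemma exists_ne_zero {w : ℝ → ℝ} (hpos : 0 < ∫ x in (0:ℝ)..1, (w x) ^ 2) :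
    ∃ x ∈ Set.Icc (0:ℝ) 1, w x ≠ 0 := by
  by_contra h
  push_neg at h
  have : ∫ x in (0:ℝ)..1, (w x) ^ 2 = 0 := by
    rw [intervalIntegral.integral_congr (g := fun _ => (0:ℝ))]
    · simp
    · intro t ht
      rw [Set.uIcc_of_le zero_le_one] at ht
      simp [h t ht]
  linarith

/-- For `ν ≠ 0`, a simply supported strip deflection solving simultaneously the PGD limit
equation and the Kirchhoff–Love equation must be a pure sinusoidal deflection
`w(x) = c sin(nπx)` under a sinusoidal load. -/
theorem simply_supported_solution_is_sinusoidal
    (ν : ℝ) (hν : ν ∈ Set.Ioo (-1 : ℝ) (1/2)) (hν0 : ν ≠ 0)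
    (p : ℝ → ℝ) (hp : ContinuousOn p (Set.Icc (0 : ℝ) 1))
    (w : ℝ → ℝ) (hw : ContDiffOn ℝ 4 w (Set.Icc (0 : ℝ) 1))
    (hpos : 0 < ∫ x in (0:ℝ)..1, (w x) ^ 2)
    (h0 : w 0 = 0) (h1 : w 1 = 0) (h0'' : D 2 w 0 = 0) (h1'' : D 2 w 1 = 0)
    (hPGD : PGDeq ν w p) (hKL : KLeq ν w p) :
    ∃ n : ℕ, 0 < n ∧ ∃ c : ℝ, c ≠ 0 ∧
      (∀ x ∈ Set.Icc (0 : ℝ) 1, w x = c * Real.sin ((n : ℝ) * π * x)) ∧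
      (∀ x ∈ Set.Icc (0 : ℝ) 1,
        p x = (c * ((n : ℝ) * π) ^ 4 / (12 * (1 - ν ^ 2))) * Real.sin ((n : ℝ) * π * x)) := by
  obtain ⟨hνa, hνb⟩ := hν
  have h1p : (0:ℝ) < 1 + ν := by linarith
  have h2p : (0:ℝ) < 1 - 2*ν := by linarith
  have h3p : (0:ℝ) < 1 - ν := by linarith
  have hsq : (0:ℝ) < 1 - ν^2 := by nlinarith
  have hν2p : (0:ℝ) < ν^2 := by positivity
  have us : UniqueDiffOn ℝ (Set.Icc (0:ℝ) 1) := uniqueDiffOn_Icc one_pos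
  set k : ℝ := kappa w with hkdef
  have one_mem : (1:ℝ) ∈ Set.Icc (0:ℝ) 1 := ⟨zero_le_one, le_refl 1⟩
  -- derivative and continuity facts
  have hD0 : D 0 w = w := iteratedDerivWithin_zero
  have hder : ∀ m : ℕ, m < 4 → ∀ x ∈ Set.Icc (0:ℝ) 1,
      HasDerivWithinAt (D m w) (D (m+1) w x) (Set.Icc (0:ℝ) 1) x := by
    intro m hm x hx
    have hdiff : DifferentiableOn ℝ (D m w) (Set.Icc (0:ℝ) 1) :=
      hw.differentiableOn_iteratedDerivWithin (by exact_mod_cast hm) us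
    have h3 : D (m+1) w x = derivWithin (D m w) (Set.Icc (0:ℝ) 1) x :=
      congrFun iteratedDerivWithin_succ x
    rw [h3]
    exact (hdiff x hx).hasDerivWithinAt
  have hcont : ∀ m : ℕ, m ≤ 4 → ContinuousOn (D m w) (Set.Icc (0:ℝ) 1) := fun m hm =>
    hw.continuousOn_iteratedDerivWithin (by exact_mod_cast hm) us
  have hderw : ∀ x ∈ Set.Icc (0:ℝ) 1, HasDerivWithinAt w (D 1 w x) (Set.Icc (0:ℝ) 1) x := by
    intro x hx
    have := hder 0 (by norm_num) x hx
    rwa [hD0] at this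
  have hcw : ContinuousOn w (Set.Icc (0:ℝ) 1) := hw.continuousOn
  -- Step A: the combined ODE
  have hE : ∀ x ∈ Set.Icc (0:ℝ) 1, D 4 w x = 2 * k * D 2 w x - k ^ 2 * w x := by
    intro x hx
    have e1 := hPGD x hx
    have e2 := hKL x hx
    rw [← hkdef] at e1
    have d1 : (12:ℝ) * (1 + ν) * (1 - 2*ν) ≠ 0 := by positivity
    have d2 : (12:ℝ) * (1 - ν^2) ≠ 0 := by positivity
    have d3 : (12:ℝ) * (1 - ν^2) * (1 - 2*ν) ≠ 0 := by positivity
    have hAC : (1 - ν) / (12 * (1 + ν) * (1 - 2 * ν)) - 1 / (12 * (1 - ν ^ 2))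
        = ν ^ 2 / (12 * (1 - ν ^ 2) * (1 - 2 * ν)) := by
      rw [div_sub_div _ _ d1 d2, div_eq_div_iff (mul_ne_zero d1 d2) d3]
      ring
    have e3 : ν ^ 2 / (12 * (1 - ν ^ 2) * (1 - 2 * ν)) * D 4 w x
        = ν ^ 2 / (12 * (1 - ν ^ 2) * (1 - 2 * ν)) * (2 * k * D 2 w x - k ^ 2 * w x) := by
      have e4 : ((1 - ν) / (12 * (1 + ν) * (1 - 2 * ν)) - 1 / (12 * (1 - ν ^ 2))) * D 4 w x
          = ν ^ 2 / (12 * (1 - ν ^ 2) * (1 - 2 * ν)) * (2 * k * D 2 w x - k ^ 2 * w x) := by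
        linear_combination e1 - e2
      rwa [hAC] at e4
    have hBne : ν ^ 2 / (12 * (1 - ν ^ 2) * (1 - 2 * ν)) ≠ 0 := by positivity
    exact mul_left_cancel₀ hBne e3
  -- Step B: integration by parts
  have hibp : ∫ t in (0:ℝ)..1, (D 1 w t ^ 2 + w t * D 2 w t) = 0 := by
    have h := myftc (f := fun t => w t * D 1 w t)
      (f' := fun t => D 1 w t ^ 2 + w t * D 2 w t)
      (hcw.mul (hcont 1 (by norm_num)))
      (fun t ht => by
        have hh := (hderw t ht).mul (hder 1 (by norm_num) t ht)
        exact hh.congr_deriv (by ring))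
      (((hcont 1 (by norm_num)).pow 2).add (hcw.mul (hcont 2 (by norm_num)))) one_mem
    rw [h]
    simp [h0, h1]
  have hInt1 : IntervalIntegrable (fun t => D 1 w t ^ 2) MeasureTheory.volume 0 1 :=
    ((hcont 1 (by norm_num)).pow 2).intervalIntegrable_of_Icc zero_le_one
  have hInt2 : IntervalIntegrable (fun t => w t * D 2 w t) MeasureTheory.volume 0 1 :=
    (hcw.mul (hcont 2 (by norm_num))).intervalIntegrable_of_Icc zero_le_one
  have hsum := intervalIntegral.integral_add hInt1 hInt2
  rw [hibp] at hsum
  have hw1nn : 0 ≤ ∫ t in (0:ℝ)..1, D 1 w t ^ 2 :=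
    intervalIntegral.integral_nonneg zero_le_one (fun t _ => sq_nonneg _)
  have hIle : (∫ t in (0:ℝ)..1, w t * D 2 w t) ≤ 0 := by linarith
  have hk_le : k ≤ 0 := by
    rw [hkdef, kappa]
    exact div_nonpos_of_nonpos_of_nonneg hIle hpos.le
  -- Step C : k ≠ 0
  have hk_ne : k ≠ 0 := by
    intro hk0
    have hkI : k * (∫ x in (0:ℝ)..1, (w x)^2) = ∫ t in (0:ℝ)..1, w t * D 2 w t := by
      rw [hkdef, kappa]
      field_simp
    rw [hk0, zero_mul] at hkI
    have hw1z : ∫ t in (0:ℝ)..1, D 1 w t ^ 2 = 0 := by linarith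
    have hz : ∀ t ∈ Set.Icc (0:ℝ) 1, D 1 w t = 0 := by
      intro t ht
      exact sq_eq_zero_iff.mp
        (Zlem ((hcont 1 (by norm_num)).pow 2) (fun y _ => sq_nonneg _) hw1z t ht)
    have hwz : ∀ x ∈ Set.Icc (0:ℝ) 1, w x = 0 := by
      intro x hx
      have hc := myconst hcw (fun t ht => hz t ht ▸ hderw t ht) hx
      rw [hc, h0]
    obtain ⟨x, hx, hne⟩ := exists_ne_zero hpos
    exact hne (hwz x hx)
  have hklt : k < 0 := lt_of_le_of_ne hk_le hk_ne
  -- μ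
  set μ : ℝ := Real.sqrt (-k) with hμdef
  have hμpos : 0 < μ := Real.sqrt_pos.mpr (by linarith)
  have hμsq : μ ^ 2 = -k := Real.sq_sqrt (by linarith)
  have hkμ : k = -μ^2 := by linarith
  -- v := D2 w - k w is identically zero (Wronskian trick)
  have hv0 : D 2 w 0 - k * w 0 = 0 := by rw [h0'', h0]; ring
  have hv1 : D 2 w 1 - k * w 1 = 0 := by rw [h1'', h1]; ring
  have hcv : ContinuousOn (fun t => D 2 w t - k * w t) (Set.Icc (0:ℝ) 1) :=
    (hcont 2 (by norm_num)).sub (continuousOn_const.mul hcw)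
  have hcg : ContinuousOn (fun t => D 3 w t - k * D 1 w t) (Set.Icc (0:ℝ) 1) :=
    (hcont 3 (by norm_num)).sub (continuousOn_const.mul (hcont 1 (by norm_num)))
  have hdv : ∀ x ∈ Set.Icc (0:ℝ) 1, HasDerivWithinAt (fun t => D 2 w t - k * w t)
      (D 3 w x - k * D 1 w x) (Set.Icc (0:ℝ) 1) x := fun x hx =>
    (hder 2 (by norm_num) x hx).sub ((hderw x hx).const_mul k)
  have hdg : ∀ x ∈ Set.Icc (0:ℝ) 1, HasDerivWithinAt (fun t => D 3 w t - k * D 1 w t)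
      (k * (D 2 w x - k * w x)) (Set.Icc (0:ℝ) 1) x := by
    intro x hx
    have hh := (hder 3 (by norm_num) x hx).sub ((hder 1 (by norm_num) x hx).const_mul k)
    have heq : D 4 w x - k * D 2 w x = k * (D 2 w x - k * w x) := by
      rw [hE x hx]; ring
    rw [← heq]
    exact hh
  have hWint : ∫ t in (0:ℝ)..1, (D 2 w t - k * w t) ^ 2 = 0 := by
    have h := myftc
      (f := fun t => w t * (D 3 w t - k * D 1 w t) - D 1 w t * (D 2 w t - k * w t))
      (f' := fun t => -((D 2 w t - k * w t) ^ 2))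
      ((hcw.mul hcg).sub ((hcont 1 (by norm_num)).mul hcv))
      (fun t ht => by
        have hh := ((hderw t ht).mul (hdg t ht)).sub ((hder 1 (by norm_num) t ht).mul (hdv t ht))
        exact hh.congr_deriv (by ring))
      ((hcv.pow 2).neg) one_mem
    rw [intervalIntegral.integral_neg] at h
    have : (fun t => w t * (D 3 w t - k * D 1 w t) - D 1 w t * (D 2 w t - k * w t)) 1
        - (fun t => w t * (D 3 w t - k * D 1 w t) - D 1 w t * (D 2 w t - k * w t)) 0 = 0 := by
      simp only
      rw [h0, h1, h0'', h1'']
      ring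
    rw [this] at h
    linarith
  have hvz : ∀ x ∈ Set.Icc (0:ℝ) 1, D 2 w x - k * w x = 0 := fun x hx =>
    sq_eq_zero_iff.mp (Zlem (hcv.pow 2) (fun t _ => sq_nonneg _) hWint x hx)
  have hw2 : ∀ x ∈ Set.Icc (0:ℝ) 1, D 2 w x = k * w x := fun x hx => by
    have := hvz x hx; linarith
  -- constants trick
  have hμne : μ ≠ 0 := hμpos.ne'
  have hsc : ∀ x:ℝ, HasDerivAt (fun y => Real.sin (μ*y)) (μ * Real.cos (μ*x)) x := by
    intro x
    have hlin : HasDerivAt (fun y : ℝ => μ * y) μ x := by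
      simpa using (hasDerivAt_id x).const_mul μ
    have hcomp := (Real.hasDerivAt_sin (μ*x)).comp x hlin
    simp only [Function.comp_def] at hcomp
    exact hcomp.congr_deriv (by ring)
  have hcc : ∀ x:ℝ, HasDerivAt (fun y => Real.cos (μ*y)) (-(μ * Real.sin (μ*x))) x := by
    intro x
    have hlin : HasDerivAt (fun y : ℝ => μ * y) μ x := by
      simpa using (hasDerivAt_id x).const_mul μ
    have hcomp := (Real.hasDerivAt_cos (μ*x)).comp x hlin
    simp only [Function.comp_def] at hcomp
    exact hcomp.congr_deriv (by ring)
  have hccont : ContinuousOn (fun y : ℝ => Real.cos (μ*y)) (Set.Icc (0:ℝ) 1) :=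
    (Real.continuous_cos.comp (continuous_const.mul continuous_id)).continuousOn
  have hscont : ContinuousOn (fun y : ℝ => Real.sin (μ*y)) (Set.Icc (0:ℝ) 1) :=
    (Real.continuous_sin.comp (continuous_const.mul continuous_id)).continuousOn
  have hP : ∀ x ∈ Set.Icc (0:ℝ) 1, μ * w x * Real.cos (μ*x) - D 1 w x * Real.sin (μ*x) = 0 := by
    intro x hx
    have h := myconst (f := fun y => μ * w y * Real.cos (μ*y) - D 1 w y * Real.sin (μ*y))
      (((continuousOn_const.mul hcw).mul hccont).sub ((hcont 1 (by norm_num)).mul hscont))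
      (fun t ht => by
        have hh := (((hderw t ht).const_mul μ).mul (hcc t).hasDerivWithinAt).sub
          ((hder 1 (by norm_num) t ht).mul (hsc t).hasDerivWithinAt)
        exact hh.congr_deriv (by rw [hw2 t ht, hkμ]; ring)) hx
    rw [h, h0]
    simp
  have hQ : ∀ x ∈ Set.Icc (0:ℝ) 1,
      μ * w x * Real.sin (μ*x) + D 1 w x * Real.cos (μ*x) = D 1 w 0 := by
    intro x hx
    have h := myconst (f := fun y => μ * w y * Real.sin (μ*y) + D 1 w y * Real.cos (μ*y))
      (((continuousOn_const.mul hcw).mul hscont).add ((hcont 1 (by norm_num)).mul hccont))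
      (fun t ht => by
        have hh := (((hderw t ht).const_mul μ).mul (hsc t).hasDerivWithinAt).add
          ((hder 1 (by norm_num) t ht).mul (hcc t).hasDerivWithinAt)
        exact hh.congr_deriv (by rw [hw2 t ht, hkμ]; ring)) hx
    rw [h, h0]
    simp
  have hchar : ∀ x ∈ Set.Icc (0:ℝ) 1, w x = (D 1 w 0 / μ) * Real.sin (μ * x) := by
    intro x hx
    have hp' := hP x hx
    have hq := hQ x hx
    have htrig := Real.sin_sq_add_cos_sq (μ * x)
    have h5 : μ * w x = D 1 w 0 * Real.sin (μ*x) := by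
      linear_combination Real.cos (μ*x) * hp' + Real.sin (μ*x) * hq - (μ * w x) * htrig
    field_simp
    linear_combination h5
  obtain ⟨x0, hx0, hne0⟩ := exists_ne_zero hpos
  have hcne : D 1 w 0 / μ ≠ 0 := by
    intro hc
    exact hne0 (by rw [hchar x0 hx0, hc, zero_mul])
  have hsinμ : Real.sin μ = 0 := by
    have hh := hchar 1 one_mem
    rw [h1] at hh
    rcases mul_eq_zero.mp hh.symm with h | h
    · exact absurd h hcne
    · simpa using h
  obtain ⟨m, hm⟩ := Real.sin_eq_zero_iff.mp hsinμ
  have hm0 : 0 < m := by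
    by_contra hmn
    push_neg at hmn
    have hmr : (m:ℝ) ≤ 0 := by exact_mod_cast hmn
    nlinarith [Real.pi_pos]
  have hnμ : (m.toNat : ℝ) * π = μ := by
    rw [show ((m.toNat:ℕ):ℝ) = (m:ℝ) by exact_mod_cast Int.toNat_of_nonneg hm0.le]
    exact hm
  refine ⟨m.toNat, by omega, D 1 w 0 / μ, hcne, ?_, ?_⟩
  · intro x hx
    rw [hchar x hx, hnμ]
  · intro x hx
    have e2 := hKL x hx
    have hd4 : D 4 w x = k^2 * w x := by rw [hE x hx, hw2 x hx]; ring
    rw [← e2, hd4, hchar x hx, hkμ, ← hnμ]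
    ring
end

section
/- Let ν ∈ (−1, 1/2), let n be a positive integer, and let p_n be a nonzero real number. Define w(x) = (12·(1−ν²)·p_n/(n·π)⁴)·sin(n·π·x) and p(x) = p_n·sin(n·π·x). Then w satisfies the simply supported boundary conditions w(0) = w(1) = 0, w''(0) = w''(1) = 0, and w solves simultaneously the Kirchhoff–Love strip equation with Poisson ratio ν and load p and the PGD limit strip equation with Poisson ratio ν and load p. -/
open Real

/-- For a sinusoidal load `p(x) = pₙ sin(nπx)`, the simply supported Kirchhoff–Love
deflection `w(x) = 12(1−ν²)pₙ/(nπ)⁴ · sin(nπx)` solves both the Kirchhoff–Love strip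
equation and the PGD limit strip equation. -/
theorem sinusoidal_deflection_solves_both_equations
    (ν : ℝ) (hν : ν ∈ Set.Ioo (-1 : ℝ) (1/2))
    (n : ℕ) (hn : 0 < n) (pn : ℝ) (hpn : pn ≠ 0)
    (w p : ℝ → ℝ)
    (hw : ∀ x, w x = (12 * (1 - ν ^ 2) * pn / ((n : ℝ) * π) ^ 4)
            * Real.sin ((n : ℝ) * π * x))
    (hp : ∀ x, p x = pn * Real.sin ((n : ℝ) * π * x)) :
    w 0 = 0 ∧ w 1 = 0 ∧ D 2 w 0 = 0 ∧ D 2 w 1 = 0 ∧ KLeq ν w p ∧ PGDeq ν w p := by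
  set k : ℝ := (n : ℝ) * π with hk
  have hkne : k ≠ 0 := by
    have : (n : ℝ) ≠ 0 := Nat.cast_ne_zero.mpr hn.ne'
    positivity
  have hν2 : 1 - ν ^ 2 ≠ 0 := by
    have h1 : ν + 1 > 0 := by linarith [hν.1]
    have h2 : 1 - ν > 0 := by linarith [hν.2]
    nlinarith
  set c : ℝ := 12 * (1 - ν ^ 2) * pn / k ^ 4 with hc
  have hcne : c ≠ 0 := by
    apply div_ne_zero _ (pow_ne_zero _ hkne)
    exact mul_ne_zero (mul_ne_zero (by norm_num) hν2) hpn
  have hsinnk : Real.sin k = 0 := by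
    rw [hk]; exact Real.sin_nat_mul_pi n
  have hud : UniqueDiffOn ℝ (Set.Icc (0:ℝ) 1) := uniqueDiffOn_Icc one_pos
  -- helper for derivWithin
  have derivW : ∀ (f g : ℝ → ℝ), (∀ x, HasDerivAt f (g x) x) →
      ∀ x ∈ Set.Icc (0:ℝ) 1, derivWithin f (Set.Icc (0:ℝ) 1) x = g x := by
    intro f g h x hx
    exact ((h x).hasDerivWithinAt).derivWithin (hud x hx)
  -- the derivative family
  have hder : ∀ (a b : ℝ), ∀ x : ℝ,
      HasDerivAt (fun y => a * Real.sin (k * y) + b * Real.cos (k * y))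
        ((a * k) * Real.cos (k * x) + (-(b * k)) * Real.sin (k * x)) x := by
    intro a b x
    have hkx : HasDerivAt (fun y : ℝ => k * y) k x := by
      simpa using (hasDerivAt_id x).const_mul k
    have hs : HasDerivAt (fun y => Real.sin (k * y)) (Real.cos (k * x) * k) x :=
      (Real.hasDerivAt_sin (k * x)).comp x hkx
    have hcs : HasDerivAt (fun y => Real.cos (k * y)) (-Real.sin (k * x) * k) x :=
      (Real.hasDerivAt_cos (k * x)).comp x hkx
    have := (hs.const_mul a).add (hcs.const_mul b)
    refine this.congr_deriv ?_
    ring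
  have hweq : ∀ x : ℝ, w x = c * Real.sin (k * x) + 0 * Real.cos (k * x) := by
    intro x; rw [hw x]; ring_nf
  -- D 1
  have hD1 : ∀ x ∈ Set.Icc (0:ℝ) 1,
      D 1 w x = 0 * Real.sin (k * x) + (c * k) * Real.cos (k * x) := by
    intro x hx
    rw [D, iteratedDerivWithin_one]
    have := derivW w (fun x => (c * k) * Real.cos (k * x) + (-(0 * k)) * Real.sin (k * x))
      (fun x => by simpa [funext hweq] using hder c 0 x) x hx
    rw [this]; ring
  -- generic step
  have step : ∀ (m : ℕ) (a b : ℝ),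
      (∀ x ∈ Set.Icc (0:ℝ) 1, D m w x = a * Real.sin (k * x) + b * Real.cos (k * x)) →
      ∀ x ∈ Set.Icc (0:ℝ) 1,
        D (m+1) w x = (-(b * k)) * Real.sin (k * x) + (a * k) * Real.cos (k * x) := by
    intro m a b hm x hx
    rw [D, iteratedDerivWithin_succ]
    have hcongr : derivWithin (iteratedDerivWithin m w (Set.Icc (0:ℝ) 1)) (Set.Icc (0:ℝ) 1) x
        = derivWithin (fun y => a * Real.sin (k * y) + b * Real.cos (k * y))
            (Set.Icc (0:ℝ) 1) x :=
      derivWithin_congr (fun y hy => hm y hy) (hm x hx)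
    rw [hcongr, derivW _ _ (hder a b) x hx]
    ring
  have hD2 : ∀ x ∈ Set.Icc (0:ℝ) 1,
      D 2 w x = (-(c * k * k)) * Real.sin (k * x) + 0 * Real.cos (k * x) := by
    intro x hx
    have := step 1 0 (c * k) hD1 x hx
    simpa using this
  have hD3 : ∀ x ∈ Set.Icc (0:ℝ) 1,
      D 3 w x = 0 * Real.sin (k * x) + (-(c * k * k) * k) * Real.cos (k * x) := by
    intro x hx
    have := step 2 (-(c * k * k)) 0 hD2 x hx
    simpa using this
  have hD4 : ∀ x ∈ Set.Icc (0:ℝ) 1,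
      D 4 w x = c * k ^ 4 * Real.sin (k * x) := by
    intro x hx
    have := step 3 0 (-(c * k * k) * k) hD3 x hx
    rw [this]; ring
  have hD2' : ∀ x ∈ Set.Icc (0:ℝ) 1, D 2 w x = -(c * k ^ 2) * Real.sin (k * x) := by
    intro x hx; rw [hD2 x hx]; ring
  -- boundary values
  have h0 : (0:ℝ) ∈ Set.Icc (0:ℝ) 1 := by constructor <;> norm_num
  have h1 : (1:ℝ) ∈ Set.Icc (0:ℝ) 1 := by constructor <;> norm_num
  -- integral of sin^2
  have hsin2 : (∫ x in (0:ℝ)..1, Real.sin (k * x) ^ 2) = 1 / 2 := by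
    have := intervalIntegral.integral_comp_mul_left (fun x => Real.sin x ^ 2) hkne
      (a := (0:ℝ)) (b := 1)
    rw [this]
    rw [integral_sin_sq]
    simp [hsinnk]
    field_simp
  -- kappa
  have hkappa : kappa w = -(k ^ 2) := by
    have hI2 : (∫ x in (0:ℝ)..1, w x * D 2 w x) = -(k^2) * (c ^ 2 * (1/2)) := by
      have : (∫ x in (0:ℝ)..1, w x * D 2 w x)
          = ∫ x in (0:ℝ)..1, (-(c^2 * k^2)) * Real.sin (k * x) ^ 2 := by
        apply intervalIntegral.integral_congr
        intro x hx
        rw [Set.uIcc_of_le (by norm_num : (0:ℝ) ≤ 1)] at hx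
        show w x * D 2 w x = _
        rw [hw x, hD2' x hx]; ring_nf
      rw [this, intervalIntegral.integral_const_mul, hsin2]; ring
    have hI0 : (∫ x in (0:ℝ)..1, (w x) ^ 2) = c ^ 2 * (1/2) := by
      have : (∫ x in (0:ℝ)..1, (w x) ^ 2)
          = ∫ x in (0:ℝ)..1, c ^ 2 * Real.sin (k * x) ^ 2 := by
        apply intervalIntegral.integral_congr
        intro x hx
        show (w x) ^ 2 = _
        rw [hw x]; ring_nf
      rw [this, intervalIntegral.integral_const_mul, hsin2]
    rw [kappa, hI2, hI0]
    have : c ^ 2 * (1/2) ≠ 0 := by positivity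
    field_simp
  refine ⟨by simp [hw], by simp [hw, hsinnk, hk], ?_, ?_, ?_, ?_⟩
  · rw [hD2' 0 h0]; simp
  · rw [hD2' 1 h1]; simp [hsinnk]
  · intro x hx
    rw [hD4 x hx, hp x, hc]
    field_simp
  · intro x hx
    rw [hD4 x hx, hD2' x hx, hkappa, hp x, hw x, hc]
    have h12 : 1 - 2 * ν ≠ 0 := by
      intro h; linarith [hν.2]
    have h1ν : 1 + ν ≠ 0 := by intro h; nlinarith [hν.1]
    field_simp
    have h12' : 1 - ν * 2 ≠ 0 := by intro h; linarith [hν.2]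
    field_simp
    ring
end

section
/- Let ω ⊂ ℝ² be a bounded open set, ν ∈ (−1, 1/2), λ ∈ ℝ, and let u : ℝ² → ℝ be four times continuously differentiable on a neighborhood of the closure of ω, with Δu(x) = λ·u(x) for all x ∈ ω and 0 < ∫_ω u(x)² dx < ∞. Set κ(u) = (∫_ω u(x)·Δu(x) dx)/(∫_ω u(x)² dx). Then κ(u) = λ, and for every x ∈ ω: (i) Δ²u(x) − 2·κ(u)·Δu(x) + κ(u)²·u(x) = 0, and (ii) ((1−ν)/(12(1+ν)(1−2ν)))·Δ²u(x) − (ν²/(12(1−ν²)(1−2ν)))·(2·κ(u)·Δu(x) − κ(u)²·u(x)) = (1/(12(1−ν²)))·Δ²u(x); that is, the left-hand side of the PGD limit plate equation applied to u coincides with the left-hand side of the Kirchhoff–Love plate equation applied to u. -/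
/-- The Laplacian of `u : ℝ² → ℝ`, `Δu = ∂²u/∂x₁² + ∂²u/∂x₂²`. -/
noncomputable def lap (u : ℝ × ℝ → ℝ) : ℝ × ℝ → ℝ := fun x =>
  deriv (deriv fun t => u (t, x.2)) x.1 + deriv (deriv fun t => u (x.1, t)) x.2

/-- If `Δu = λ u` on a bounded open `ω ⊂ ℝ²` (with `u` four times continuously
differentiable on a neighborhood of the closure of `ω` and `0 < ∫_ω u² < ∞`),
then the Rayleigh quotient `κ(u) = (∫_ω u Δu)/(∫_ω u²)` equals `λ`,
`u` satisfies `Δ²u − 2κ(u)Δu + κ(u)²u = 0` on `ω`, and the left-hand side of the PGD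
limit plate equation coincides on `ω` with that of the Kirchhoff–Love plate equation. -/
theorem helmholtz_solution_makes_PGD_and_KL_coincide
    (ω : Set (ℝ × ℝ)) (hω : IsOpen ω) (hb : Bornology.IsBounded ω)
    (ν : ℝ) (hν : ν ∈ Set.Ioo (-1 : ℝ) (1/2)) (l : ℝ)
    (u : ℝ × ℝ → ℝ)
    (hu : ∃ U : Set (ℝ × ℝ), IsOpen U ∧ closure ω ⊆ U ∧ ContDiffOn ℝ 4 u U)
    (hhelm : ∀ x ∈ ω, lap u x = l * u x)
    (hint : MeasureTheory.IntegrableOn (fun x => (u x) ^ 2) ω)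
    (hpos : 0 < ∫ x in ω, (u x) ^ 2) :
    (∫ x in ω, u x * lap u x) / (∫ x in ω, (u x) ^ 2) = l ∧
      ∀ x ∈ ω,
        (lap (lap u) x
            - 2 * ((∫ y in ω, u y * lap u y) / (∫ y in ω, (u y) ^ 2)) * lap u x
            + ((∫ y in ω, u y * lap u y) / (∫ y in ω, (u y) ^ 2)) ^ 2 * u x = 0)
        ∧ (((1 - ν) / (12 * (1 + ν) * (1 - 2 * ν))) * lap (lap u) x
            - (ν ^ 2 / (12 * (1 - ν ^ 2) * (1 - 2 * ν)))
                * (2 * ((∫ y in ω, u y * lap u y) / (∫ y in ω, (u y) ^ 2)) * lap u x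
                    - ((∫ y in ω, u y * lap u y) / (∫ y in ω, (u y) ^ 2)) ^ 2 * u x)
          = (1 / (12 * (1 - ν ^ 2))) * lap (lap u) x) := by

  obtain ⟨hν1, hν2⟩ := hν
  have hI : (∫ x in ω, u x * lap u x) = l * ∫ x in ω, (u x) ^ 2 := by
    rw [← MeasureTheory.integral_const_mul]
    exact MeasureTheory.setIntegral_congr_fun hω.measurableSet
      (fun x hx => by rw [hhelm x hx]; ring)
  have hκ : (∫ x in ω, u x * lap u x) / (∫ x in ω, (u x) ^ 2) = l := by
    rw [hI, mul_div_assoc, div_self hpos.ne', mul_one]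
  refine ⟨hκ, fun x hx => ?_⟩
  have hmem : ω ∈ nhds x := hω.mem_nhds hx
  have h1 : (fun t => lap u (t, x.2)) =ᶠ[nhds x.1] fun t => l * u (t, x.2) := by
    have hc : ContinuousAt (fun t : ℝ => (t, x.2)) x.1 := by fun_prop
    filter_upwards [hc.preimage_mem_nhds (by rwa [Prod.mk.eta])] with t ht
    exact hhelm _ ht
  have h2 : (fun t => lap u (x.1, t)) =ᶠ[nhds x.2] fun t => l * u (x.1, t) := by
    have hc : ContinuousAt (fun t : ℝ => (x.1, t)) x.2 := by fun_prop
    filter_upwards [hc.preimage_mem_nhds (by rwa [Prod.mk.eta])] with t ht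
    exact hhelm _ ht
  have hl : lap u x = l * u x := hhelm x hx
  have hlap2 : lap (lap u) x = l * (l * u x) := by
    have d1 : deriv (deriv fun t => lap u (t, x.2)) x.1
        = l * deriv (deriv fun t => u (t, x.2)) x.1 := by
      rw [h1.deriv.deriv_eq,
        show (deriv fun t => l * u (t, x.2)) = fun t => l * deriv (fun s => u (s, x.2)) t from
          funext fun t => deriv_const_mul_field l,
        deriv_const_mul_field]
    have d2 : deriv (deriv fun t => lap u (x.1, t)) x.2
        = l * deriv (deriv fun t => u (x.1, t)) x.2 := by
      rw [h2.deriv.deriv_eq,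
        show (deriv fun t => l * u (x.1, t)) = fun t => l * deriv (fun s => u (x.1, s)) t from
          funext fun t => deriv_const_mul_field l,
        deriv_const_mul_field]
    show _ + _ = _
    rw [d1, d2, ← mul_add, ← hl]
    rfl
  have ha : (1:ℝ) + ν > 0 := by linarith
  have hb2 : (1:ℝ) - 2*ν > 0 := by linarith
  have hc3 : (1:ℝ) - ν > 0 := by linarith
  have hsq : (1:ℝ) - ν^2 ≠ 0 := by nlinarith
  constructor
  · rw [hκ, hlap2, hl]; ring
  · rw [hκ, hlap2, hl]
    have h12 : (1:ℝ) - ν * 2 ≠ 0 := by linarith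
    field_simp
    ring
end

section
/- Let ν ∈ (−1, 1/2), let n be a positive integer, and let p_n be a nonzero real number. Let ω = (0,1) × (0,1) ⊂ ℝ², define u(x₁,x₂) = (3·p_n·(1−ν²)/(n⁴·π⁴))·sin(n·π·x₁)·sin(n·π·x₂) and p(x₁,x₂) = p_n·sin(n·π·x₁)·sin(n·π·x₂). Then Δu = −2·n²·π²·u on ω, ∫_ω u² > 0, and u solves simultaneously, at every point of ω, the Kirchhoff–Love plate equation (1/(12(1−ν²)))·Δ²u = p and the PGD limit plate equation ((1−ν)/(12(1+ν)(1−2ν)))·Δ²u − (ν²/(12(1−ν²)(1−2ν)))·(2·κ(u)·Δu − κ(u)²·u) = p, where κ(u) = (∫_ω u·Δu)/(∫_ω u²). -/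
open Real

lemma second_deriv_ksin (k a t : ℝ) :
    deriv (deriv fun s => k * Real.sin (a * s)) t = -(a^2) * (k * Real.sin (a * t)) := by
  have hd : (deriv fun s => k * Real.sin (a * s)) = fun s => k * (Real.cos (a*s) * a) := by
    funext s
    exact (((Real.hasDerivAt_sin (a*s)).comp s
      (by simpa using (hasDerivAt_id s).const_mul a)).const_mul k).deriv
  rw [hd]
  have h2 : HasDerivAt (fun s => k * (Real.cos (a*s) * a)) (k * ((-Real.sin (a*t) * a) * a)) t := by
    have h := ((Real.hasDerivAt_cos (a*t)).comp t
      (by simpa using (hasDerivAt_id t).const_mul a))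
    exact (h.mul_const a).const_mul k
  rw [h2.deriv]; ring

lemma lap_sinsin (C a : ℝ) (u : ℝ×ℝ→ℝ)
    (hu : ∀ x : ℝ×ℝ, u x = C * Real.sin (a*x.1) * Real.sin (a*x.2)) (x : ℝ×ℝ) :
    lap u x = -2*a^2*u x := by
  have h1 : (fun t => C * Real.sin (a*t) * Real.sin (a*x.2))
      = fun t => (C * Real.sin (a*x.2)) * Real.sin (a*t) := by
    funext t; ring
  have h2 : (fun t => C * Real.sin (a*x.1) * Real.sin (a*t))
      = fun t => (C * Real.sin (a*x.1)) * Real.sin (a*t) := by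
    funext t; ring
  simp only [lap, hu]
  rw [h1, h2, second_deriv_ksin, second_deriv_ksin]
  ring

lemma int_sin_sq (n : ℕ) (hn : 0 < n) :
    ∫ t in Set.Ioo (0:ℝ) 1, Real.sin ((n:ℝ)*π*t)^2 = 1/2 := by
  have ha : (n:ℝ)*π ≠ 0 := by positivity
  set a : ℝ := (n:ℝ)*π with hadef
  have key : ∫ t in (0:ℝ)..1, Real.sin (a*t)^2 = 1/2 := by
    have hF : ∀ t ∈ Set.uIcc (0:ℝ) 1,
        HasDerivAt (fun t => t/2 - Real.sin (2*a*t)/(4*a)) (Real.sin (a*t)^2) t := by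
      intro t _
      have h1 : HasDerivAt (fun t:ℝ => t/2) (1/2) t := by
        simpa using (hasDerivAt_id t).div_const 2
      have h2 : HasDerivAt (fun t => Real.sin (2*a*t)) (Real.cos (2*a*t)*(2*a)) t :=
        (Real.hasDerivAt_sin (2*a*t)).comp t (by simpa using (hasDerivAt_id t).const_mul (2*a))
      have h3 : HasDerivAt (fun t => t/2 - Real.sin (2*a*t)/(4*a)) _ t := h1.sub (h2.div_const (4*a))
      convert h3 using 1
      rw [Real.sin_sq, Real.cos_sq (a*t), ← mul_assoc]
      field_simp
      ring
    have hint : IntervalIntegrable (fun t => Real.sin (a*t)^2) MeasureTheory.volume 0 1 :=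
      (Continuous.intervalIntegrable (by continuity) 0 1)
    rw [intervalIntegral.integral_eq_sub_of_hasDerivAt hF hint]
    have hs : Real.sin (2*a) = 0 := by
      have h : (2:ℝ)*a = ((2*n : ℕ):ℝ)*π := by push_cast [hadef]; ring
      rw [h, Real.sin_nat_mul_pi]
    simp [hs]
  rw [← MeasureTheory.integral_Ioc_eq_integral_Ioo,
    ← intervalIntegral.integral_of_le (by norm_num : (0:ℝ) ≤ 1)]
  exact key

/-- On the unit square, the sinusoidal deflection
`u(x₁,x₂) = 3pₙ(1−ν²)/(n⁴π⁴) · sin(nπx₁) sin(nπx₂)` satisfies the Helmholtz equation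
`Δu = −2n²π²u`, has positive squared integral, and solves simultaneously the
Kirchhoff–Love plate equation and the PGD limit plate equation with the
sinusoidal load `p(x₁,x₂) = pₙ sin(nπx₁) sin(nπx₂)`. -/
theorem sinusoidal_plate_solves_both_equations
    (ν : ℝ) (hν : ν ∈ Set.Ioo (-1 : ℝ) (1/2))
    (n : ℕ) (hn : 0 < n) (pn : ℝ) (hpn : pn ≠ 0)
    (ω : Set (ℝ × ℝ)) (hω : ω = Set.Ioo (0:ℝ) 1 ×ˢ Set.Ioo (0:ℝ) 1)
    (u p : ℝ × ℝ → ℝ)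
    (hu : ∀ x : ℝ × ℝ, u x = (3 * pn * (1 - ν ^ 2) / ((n : ℝ) ^ 4 * π ^ 4))
            * Real.sin ((n : ℝ) * π * x.1) * Real.sin ((n : ℝ) * π * x.2))
    (hp : ∀ x : ℝ × ℝ, p x = pn * Real.sin ((n : ℝ) * π * x.1) * Real.sin ((n : ℝ) * π * x.2)) :
    (∀ x ∈ ω, lap u x = -2 * (n : ℝ) ^ 2 * π ^ 2 * u x) ∧
    (0 < ∫ x in ω, (u x) ^ 2) ∧
    ∀ x ∈ ω,
      ((1 / (12 * (1 - ν ^ 2))) * lap (lap u) x = p x)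
      ∧ (((1 - ν) / (12 * (1 + ν) * (1 - 2 * ν))) * lap (lap u) x
          - (ν ^ 2 / (12 * (1 - ν ^ 2) * (1 - 2 * ν)))
              * (2 * ((∫ y in ω, u y * lap u y) / (∫ y in ω, (u y) ^ 2)) * lap u x
                  - ((∫ y in ω, u y * lap u y) / (∫ y in ω, (u y) ^ 2)) ^ 2 * u x)
        = p x) := by
  obtain ⟨hν1, hν2⟩ := hν
  have hπ : (0:ℝ) < π := Real.pi_pos
  have hn' : (0:ℝ) < (n:ℝ) := by exact_mod_cast hn
  have hνsq : ν ^ 2 < 1 := by nlinarith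
  have hden : (1:ℝ) - ν ^ 2 ≠ 0 := by nlinarith
  have h1ν : (1:ℝ) + ν ≠ 0 := by linarith
  have h2ν : (1:ℝ) - 2 * ν ≠ 0 := by linarith
  set C : ℝ := 3 * pn * (1 - ν ^ 2) / ((n : ℝ) ^ 4 * π ^ 4) with hCdef
  have hC : C ≠ 0 := by
    rw [hCdef]
    have : ((n:ℝ) ^ 4 * π ^ 4) ≠ 0 := by positivity
    exact div_ne_zero (by
      apply mul_ne_zero (mul_ne_zero (by norm_num) hpn) hden) this
  set a : ℝ := (n:ℝ) * π with hadef
  have hu' : ∀ x : ℝ × ℝ, u x = C * Real.sin (a * x.1) * Real.sin (a * x.2) := hu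
  have hlap : ∀ x : ℝ×ℝ, lap u x = -2*a^2*u x := lap_sinsin C a u hu'
  have hlapfun : ∀ x : ℝ×ℝ, lap u x = (-2*a^2*C) * Real.sin (a*x.1) * Real.sin (a*x.2) := by
    intro x; rw [hlap x, hu' x]; ring
  have hlap2 : ∀ x : ℝ×ℝ, lap (lap u) x = -2*a^2 * lap u x :=
    lap_sinsin (-2*a^2*C) a (lap u) hlapfun
  -- the squared integral
  have hI : (∫ x in ω, (u x) ^ 2) = C ^ 2 / 4 := by
    have h1 : (∫ x in ω, (u x) ^ 2)
        = ∫ x in Set.Ioo (0:ℝ) 1 ×ˢ Set.Ioo (0:ℝ) 1,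
            (fun t => C ^ 2 * Real.sin (a*t) ^ 2) x.1 * (fun t => Real.sin (a*t) ^ 2) x.2 := by
      rw [hω]
      apply MeasureTheory.integral_congr_ae
      filter_upwards with x
      rw [hu' x]; ring
    have h2 := MeasureTheory.setIntegral_prod_mul (μ := MeasureTheory.volume)
      (ν := MeasureTheory.volume) (fun t => C ^ 2 * Real.sin (a*t) ^ 2)
      (fun t => Real.sin (a*t) ^ 2) (Set.Ioo (0:ℝ) 1) (Set.Ioo (0:ℝ) 1)
    rw [h1, MeasureTheory.Measure.volume_eq_prod, h2]
    rw [MeasureTheory.integral_const_mul]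
    rw [hadef]
    rw [int_sin_sq n hn]
    ring
  have hC2 : 0 < C ^ 2 := lt_of_le_of_ne (sq_nonneg C) (Ne.symm (pow_ne_zero 2 hC))
  -- the Rayleigh quotient
  have hJ : (∫ y in ω, u y * lap u y) = -2*a^2 * (C ^ 2 / 4) := by
    have h1 : (∫ y in ω, u y * lap u y) = ∫ y in ω, (-2*a^2) * (u y) ^ 2 :=
      MeasureTheory.integral_congr_ae (by filter_upwards with y; rw [hlap y]; ring)
    rw [h1, MeasureTheory.integral_const_mul, hI]
  have hK : (∫ y in ω, u y * lap u y) / (∫ y in ω, (u y) ^ 2) = -2*a^2 := by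
    rw [hJ, hI]
    field_simp
  refine ⟨?_, ?_, ?_⟩
  · intro x _
    rw [hlap x, hadef]; ring
  · rw [hI]; linarith
  · intro x _
    have hs : (1:ℝ) = 1 := rfl
    constructor
    · rw [hlap2 x, hlap x, hp x, hu' x, hadef, hCdef]
      have hne : ((n:ℝ) ^ 4 * π ^ 4) ≠ 0 := by positivity
      field_simp
      ring
    · rw [hK, hlap2 x, hlap x, hp x, hu' x, hadef, hCdef]
      have hne : ((n:ℝ) ^ 4 * π ^ 4) ≠ 0 := by positivity
      have h2ν' : (1:ℝ) - ν * 2 ≠ 0 := by linarith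
      field_simp
      ring
end
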